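/- arXiv:2308.03269 — 3 statements merged into one kernel-verified Lean document; each statement's English description precedes it below -/
import Mathlib

section
/- Let z₁, z₂, z₃ ∈ ℂ satisfy 0 ≤ Re(z_i), Im(z_i) ≤ 1, and let r₁, r₂ ∈ ℂ with |r₁|, |r₂| ≤ R for some R > 0. Define φ₁ = |r₁||z₁||z₂| cos(arg r₁ + arg z₁ − arg z₂) and φ₂ = |r₂||z₂||z₃| cos(arg r₂ + arg z₂ − arg z₃). If arg r₁ + arg z₁ − arg z₂ = 0 and arg r₂ + arg z₂ − arg z₃ = 0, then with r := r₁·r₂/R and φ_r := |r||z₁||z₃| cos(arg r + arg z₁ − arg z₃), we have (φ₁/(2R))·(φ₂/(2R)) ≤ φ_r/(2R). -/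
theorem composition_prob_step (R : ℝ) (hR : 0 < R) (z₁ z₂ z₃ r₁ r₂ : ℂ)
    (hz₁ : z₁ ≠ 0) (hz₂ : z₂ ≠ 0) (hz₃ : z₃ ≠ 0) (hr₁ : r₁ ≠ 0) (hr₂ : r₂ ≠ 0)
    (hb₁ : 0 ≤ z₁.re ∧ z₁.re ≤ 1 ∧ 0 ≤ z₁.im ∧ z₁.im ≤ 1)
    (hb₂ : 0 ≤ z₂.re ∧ z₂.re ≤ 1 ∧ 0 ≤ z₂.im ∧ z₂.im ≤ 1)
    (hb₃ : 0 ≤ z₃.re ∧ z₃.re ≤ 1 ∧ 0 ≤ z₃.im ∧ z₃.im ≤ 1)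
    (hra : ‖r₁‖ ≤ R) (hrb : ‖r₂‖ ≤ R)
    (hph₁ : Complex.arg r₁ + Complex.arg z₁ - Complex.arg z₂ = 0)
    (hph₂ : Complex.arg r₂ + Complex.arg z₂ - Complex.arg z₃ = 0) :
    (‖r₁‖ * ‖z₁‖ * ‖z₂‖ *
        Real.cos (Complex.arg r₁ + Complex.arg z₁ - Complex.arg z₂) / (2 * R)) *
      (‖r₂‖ * ‖z₂‖ * ‖z₃‖ *
        Real.cos (Complex.arg r₂ + Complex.arg z₂ - Complex.arg z₃) / (2 * R)) ≤
    (‖r₁ * r₂ / (R : ℂ)‖ * ‖z₁‖ * ‖z₃‖ *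
        Real.cos (Complex.arg (r₁ * r₂ / (R : ℂ)) + Complex.arg z₁ - Complex.arg z₃)) / (2 * R) := by
  -- arg of the composed relation
  have harg : Complex.arg (r₁ * r₂ / (R : ℂ)) = Complex.arg (r₁ * r₂) := by
    have h : r₁ * r₂ / (R : ℂ) = ((R⁻¹ : ℝ) : ℂ) * (r₁ * r₂) := by
      push_cast; field_simp
    rw [h, Complex.arg_real_mul _ (by positivity)]
  -- the cosine on the right is 1
  have hcos : Real.cos (Complex.arg (r₁ * r₂ / (R : ℂ)) + Complex.arg z₁ - Complex.arg z₃) = 1 := by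
    have hB : Complex.arg r₁ + Complex.arg r₂ + Complex.arg z₁ - Complex.arg z₃ = 0 := by
      linarith
    have hang : ((Complex.arg (r₁ * r₂ / (R : ℂ)) + Complex.arg z₁ - Complex.arg z₃ : ℝ) : Real.Angle)
        = ((Complex.arg r₁ + Complex.arg r₂ + Complex.arg z₁ - Complex.arg z₃ : ℝ) : Real.Angle) := by
      rw [harg]
      simp only [Real.Angle.coe_sub, Real.Angle.coe_add, Complex.arg_mul_coe_angle hr₁ hr₂]
    calc Real.cos (Complex.arg (r₁ * r₂ / (R : ℂ)) + Complex.arg z₁ - Complex.arg z₃)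
        = Real.Angle.cos ((Complex.arg (r₁ * r₂ / (R : ℂ)) + Complex.arg z₁ - Complex.arg z₃ : ℝ) : Real.Angle) := (Real.Angle.cos_coe _).symm
      _ = Real.Angle.cos ((Complex.arg r₁ + Complex.arg r₂ + Complex.arg z₁ - Complex.arg z₃ : ℝ) : Real.Angle) := by rw [hang]
      _ = Real.cos (Complex.arg r₁ + Complex.arg r₂ + Complex.arg z₁ - Complex.arg z₃) := Real.Angle.cos_coe _
      _ = 1 := by rw [hB, Real.cos_zero]
  have habs : ‖r₁ * r₂ / (R : ℂ)‖ = ‖r₁‖ * ‖r₂‖ / R := by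
    simp [map_div₀, map_mul, Complex.norm_real, Real.norm_eq_abs, abs_of_pos hR]
  rw [hph₁, hph₂, hcos, habs]
  simp only [Real.cos_zero, mul_one]
  have hz2sq : ‖z₂‖ * ‖z₂‖ ≤ 2 := by
    have h := Complex.sq_norm z₂
    have hn : Complex.normSq z₂ = z₂.re * z₂.re + z₂.im * z₂.im := Complex.normSq_apply z₂
    obtain ⟨a, b, c, d⟩ := hb₂
    nlinarith [Complex.sq_norm z₂]
  have h1 : (0:ℝ) ≤ ‖r₁‖ := norm_nonneg _
  have h2 : (0:ℝ) ≤ ‖r₂‖ := norm_nonneg _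
  have h3 : (0:ℝ) ≤ ‖z₁‖ := norm_nonneg _
  have h4 : (0:ℝ) ≤ ‖z₃‖ := norm_nonneg _
  have h5 : (0:ℝ) ≤ ‖z₂‖ := norm_nonneg _
  rw [div_mul_div_comm, div_le_div_iff₀ (by positivity) (by positivity)]
  have hP : (0:ℝ) ≤ ‖r₁‖ * ‖z₁‖ * ‖r₂‖ * ‖z₃‖ * R := by
    positivity
  have hd : ‖r₁‖ * ‖r₂‖ / R * ‖z₁‖ * ‖z₃‖ * (2 * R * (2 * R))
      = ‖r₁‖ * ‖r₂‖ * ‖z₁‖ * ‖z₃‖ * (4 * R) := by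
    field_simp; ring
  nlinarith [mul_le_mul_of_nonneg_left hz2sq hP, hd]
end

section
/- Let k ≥ 1, and let z₀, z₁, …, z_k ∈ ℂ satisfy |z_i| ≤ √2 for all i (coming from the box constraint 0 ≤ Re, Im ≤ 1), and let r₁, …, r_k ∈ ℂ with 0 < |r_i| ≤ R. Define φ_i = |r_i||z_{i−1}||z_i| cos(arg r_i + arg z_{i−1} − arg z_i), and assume arg r_i + arg z_{i−1} − arg z_i = 0 for all i. Define r̂ := R·∏_{i=1}^k (r_i/R), so |r̂| ≤ R, and φ̂ := |r̂||z₀||z_k| cos(arg r̂ + arg z₀ − arg z_k). Then ∏_{i=1}^k (φ_i/(2R)) ≤ φ̂/(2R). -/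
open Finset
open Fin.NatCast

lemma arg_prod_angle {ι : Type*} (s : Finset ι) (f : ι → ℂ)
    (h : ∀ i ∈ s, f i ≠ 0) :
    ((Complex.arg (∏ i ∈ s, f i) : Real.Angle)) =
      ∑ i ∈ s, (Complex.arg (f i) : Real.Angle) := by
  classical
  induction s using Finset.cons_induction with
  | empty => simp
  | cons a s ha ih =>
    rw [Finset.prod_cons, Finset.sum_cons,
      Complex.arg_mul_coe_angle (h a (Finset.mem_cons_self a s))
        (Finset.prod_ne_zero_iff.2 fun i hi => h i (Finset.mem_cons_of_mem hi)),
      ih fun i hi => h i (Finset.mem_cons_of_mem hi)]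

theorem horn_rule_core (k : ℕ) (hk : 1 ≤ k) (R : ℝ) (hR : 0 < R)
    (z : Fin (k + 1) → ℂ) (r : Fin k → ℂ)
    (hz : ∀ i, ‖z i‖ ≤ Real.sqrt 2)
    (hrpos : ∀ i, 0 < ‖r i‖) (hrR : ∀ i, ‖r i‖ ≤ R)
    (hph : ∀ i : Fin k,
      Complex.arg (r i) + Complex.arg (z i.castSucc) - Complex.arg (z i.succ) = 0) :
    (∏ i : Fin k,
        ‖r i‖ * ‖z i.castSucc‖ * ‖z i.succ‖ *
          Real.cos (Complex.arg (r i) + Complex.arg (z i.castSucc) - Complex.arg (z i.succ)) /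
        (2 * R)) ≤
    (‖(R : ℂ) * ∏ i : Fin k, (r i / (R : ℂ))‖ * ‖z 0‖ *
        ‖z (Fin.last k)‖ *
        Real.cos (Complex.arg ((R : ℂ) * ∏ i : Fin k, (r i / (R : ℂ))) +
          Complex.arg (z 0) - Complex.arg (z (Fin.last k)))) / (2 * R) := by
  obtain ⟨m, rfl⟩ : ∃ m, k = m + 1 := ⟨k - 1, by omega⟩
  have hr0 : ∀ i, r i ≠ 0 := fun i => by
    have := hrpos i; intro h; simp [h] at this
  have hRc : (R : ℂ) ≠ 0 := by exact_mod_cast hR.ne'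
  set w : ℂ := (R : ℂ) * ∏ i : Fin (m+1), (r i / (R : ℂ)) with hw
  have hzc : ∀ i : Fin (m+1), z i.castSucc = z ((i : ℕ) : Fin (m+1+1)) := by
    intro i; congr 1; apply Fin.ext
    rw [Fin.val_cast_of_lt (Nat.lt_succ_of_lt i.isLt), Fin.coe_castSucc]
  have hzs : ∀ i : Fin (m+1), z i.succ = z (((i : ℕ) + 1 : ℕ) : Fin (m+1+1)) := by
    intro i; congr 1; apply Fin.ext
    rw [Fin.val_cast_of_lt (Nat.succ_lt_succ i.isLt), Fin.val_succ]
  have hlast : z (Fin.last (m+1)) = z (((m+1 : ℕ)) : Fin (m+1+1)) := by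
    congr 1; apply Fin.ext
    rw [Fin.val_cast_of_lt (Nat.lt_succ_self (m+1)), Fin.val_last]
  have hz00 : z 0 = z ((0 : ℕ) : Fin (m+1+1)) := by norm_num
  -- the phases on the left are all zero
  have hcosL : ∀ i : Fin (m+1),
      Real.cos (Complex.arg (r i) + Complex.arg (z i.castSucc) - Complex.arg (z i.succ)) = 1 := by
    intro i; rw [hph i, Real.cos_zero]
  -- arg of w modulo 2π
  have hwprod : w = ((R / R ^ (m+1) : ℝ) : ℂ) * ∏ i : Fin (m+1), r i := by
    rw [hw, Finset.prod_div_distrib, Finset.prod_const, Finset.card_univ, Fintype.card_fin]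
    push_cast
    field_simp
  have hargw : Complex.arg w = Complex.arg (∏ i : Fin (m+1), r i) := by
    rw [hwprod]
    exact Complex.arg_real_mul _ (by positivity)
  -- telescoping sum of args
  have htel : ∑ i : Fin (m+1), Complex.arg (r i)
      = Complex.arg (z (Fin.last (m+1))) - Complex.arg (z 0) := by
    have h1 : ∀ i : Fin (m+1), Complex.arg (r i)
        = Complex.arg (z i.succ) - Complex.arg (z i.castSucc) := by
      intro i; have := hph i; linarith
    calc ∑ i : Fin (m+1), Complex.arg (r i)
        = ∑ i : Fin (m+1),
            (fun n : ℕ => Complex.arg (z ((n + 1 : ℕ) : Fin (m+1+1)))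
              - Complex.arg (z ((n : ℕ) : Fin (m+1+1)))) (i : ℕ) :=
          Finset.sum_congr rfl fun i _ => by
            simp only []
            rw [h1 i, hzs i, hzc i]
      _ = ∑ n ∈ Finset.range (m+1),
            (Complex.arg (z ((n + 1 : ℕ) : Fin (m+1+1)))
              - Complex.arg (z ((n : ℕ) : Fin (m+1+1)))) :=
          Fin.sum_univ_eq_sum_range (fun n : ℕ => Complex.arg (z ((n + 1 : ℕ) : Fin (m+1+1)))
              - Complex.arg (z ((n : ℕ) : Fin (m+1+1)))) (m+1)
      _ = Complex.arg (z (((m+1 : ℕ)) : Fin (m+1+1)))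
            - Complex.arg (z ((0 : ℕ) : Fin (m+1+1))) :=
          Finset.sum_range_sub (fun n => Complex.arg (z ((n : ℕ) : Fin (m+1+1)))) (m+1)
      _ = Complex.arg (z (Fin.last (m+1))) - Complex.arg (z 0) := by
          rw [← hlast, ← hz00]
  have hcosR : Real.cos (Complex.arg w + Complex.arg (z 0) - Complex.arg (z (Fin.last (m+1)))) = 1 := by
    have hzero : ((Complex.arg w + Complex.arg (z 0) - Complex.arg (z (Fin.last (m+1))) : ℝ)
        : Real.Angle) = (0 : Real.Angle) := by
      have h1 : ((Complex.arg w : ℝ) : Real.Angle)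
          = ((∑ i : Fin (m+1), Complex.arg (r i) : ℝ) : Real.Angle) := by
        rw [hargw, arg_prod_angle _ _ fun i _ => hr0 i]
        exact (map_sum Real.Angle.coeHom _ _).symm
      rw [Real.Angle.coe_sub, Real.Angle.coe_add, h1, ← Real.Angle.coe_add,
        ← Real.Angle.coe_sub]
      rw [htel]
      norm_num
    calc Real.cos _ = Real.Angle.cos ((Complex.arg w + Complex.arg (z 0)
        - Complex.arg (z (Fin.last (m+1))) : ℝ) : Real.Angle) := (Real.Angle.cos_coe _).symm
      _ = 1 := by rw [hzero]; exact Real.Angle.cos_zero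
  rw [Finset.prod_congr rfl fun i _ => by rw [hcosL i, mul_one], hcosR, mul_one]
  -- now purely about absolute values
  have habsw : ‖w‖ = (∏ i : Fin (m+1), ‖r i‖) / R ^ m := by
    rw [hwprod, norm_mul, norm_prod, Complex.norm_real, Real.norm_eq_abs,
      abs_of_pos (by positivity : (0:ℝ) < R / R ^ (m+1))]
    field_simp
    ring
  set f : ℕ → ℝ := fun n => ‖z (n : Fin (m+1+1))‖ with hf
  have hcast : ∀ i : Fin (m+1), ‖z i.castSucc‖ = f (i : ℕ) := by
    intro i; rw [hzc i]
  have hsucc : ∀ i : Fin (m+1), ‖z i.succ‖ = f ((i : ℕ) + 1) := by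
    intro i; rw [hzs i]
  have hz0 : ‖z 0‖ = f 0 := by rw [hz00]
  have hzk : ‖z (Fin.last (m+1))‖ = f (m+1) := by rw [hlast]
  have hfnn : ∀ n, 0 ≤ f n := fun n => (norm_nonneg _)
  have hf2 : ∀ n, f n ≤ Real.sqrt 2 := fun n => hz _
  -- rewrite LHS
  have hL : (∏ i : Fin (m+1),
      ‖r i‖ * ‖z i.castSucc‖ * ‖z i.succ‖ / (2 * R))
      = (∏ i : Fin (m+1), ‖r i‖) * (f 0 * (∏ i ∈ Finset.range m, f (i+1))) *
        ((∏ i ∈ Finset.range m, f (i+1)) * f (m+1)) / (2 * R) ^ (m+1) := by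
    rw [Finset.prod_div_distrib, Finset.prod_const, Finset.card_univ, Fintype.card_fin]
    congr 1
    rw [Finset.prod_congr rfl fun i _ => by rw [hcast i, hsucc i]]
    rw [Finset.prod_mul_distrib, Finset.prod_mul_distrib]
    congr 1
    · congr 1
      rw [Fin.prod_univ_eq_prod_range (fun n => f n) (m+1), Finset.prod_range_succ',
        mul_comm]
    · rw [Fin.prod_univ_eq_prod_range (fun n => f (n+1)) (m+1), Finset.prod_range_succ]
  rw [hL, habsw, hz0, hzk]
  set P : ℝ := ∏ i ∈ Finset.range m, f (i+1) with hP
  have hPnn : 0 ≤ P := Finset.prod_nonneg fun i _ => hfnn _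
  have hPle : P ≤ Real.sqrt 2 ^ m := by
    calc P ≤ ∏ i ∈ Finset.range m, Real.sqrt 2 :=
          Finset.prod_le_prod (fun i _ => hfnn _) fun i _ => hf2 _
      _ = Real.sqrt 2 ^ m := by rw [Finset.prod_const, Finset.card_range]
  have hP2 : P ^ 2 ≤ 2 ^ m := by
    calc P ^ 2 ≤ (Real.sqrt 2 ^ m) ^ 2 := by
          apply pow_le_pow_left₀ hPnn hPle
      _ = (Real.sqrt 2 ^ 2) ^ m := by ring
      _ = 2 ^ m := by rw [Real.sq_sqrt (by norm_num : (0:ℝ) ≤ 2)]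
  have hann : 0 ≤ ∏ i : Fin (m+1), ‖r i‖ :=
    Finset.prod_nonneg fun i _ => norm_nonneg _
  rw [div_le_div_iff₀ (by positivity) (by positivity)]
  have key : (∏ i : Fin (m+1), ‖r i‖) * f 0 * f (m+1) * P^2 * (2 * R)
      ≤ (∏ i : Fin (m+1), ‖r i‖) * f 0 * f (m+1) * 2^m * (2 * R) := by
    have := mul_le_mul_of_nonneg_left hP2
      (mul_nonneg (mul_nonneg (mul_nonneg hann (hfnn 0)) (hfnn (m+1)))
        (by positivity : (0:ℝ) ≤ 2 * R))
    nlinarith [this]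
  calc (∏ i : Fin (m+1), ‖r i‖) * (f 0 * P) * (P * f (m+1)) * (2 * R)
      = (∏ i : Fin (m+1), ‖r i‖) * f 0 * f (m+1) * P^2 * (2 * R) := by ring
    _ ≤ (∏ i : Fin (m+1), ‖r i‖) * f 0 * f (m+1) * 2^m * (2 * R) := key
    _ = (∏ i : Fin (m+1), ‖r i‖) / R ^ m * f 0 * f (m+1) * (2 * R) ^ (m+1)
        * R^m / R^m := by field_simp; ring
    _ = (∏ i : Fin (m+1), ‖r i‖) / R ^ m * f 0 * f (m+1) * (2 * R) ^ (m+1) := by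
        field_simp
end

section
/- Let r₁, …, r_k, r ∈ ℂ^d be vectors with all coordinates nonzero, having nonnegative real and imaginary parts, coordinate-wise modulus at most R > 0, and satisfying coordinate-wise Re((r₁ × ⋯ × r_k)_l)/R^k ≤ Re(r_l)/R and Im((r₁ × ⋯ × r_k)_l)/R^k = Im(r_l)/R, where × denotes coordinate-wise (Hadamard) product. Then for all entity vectors z₀, …, z_k ∈ ℂ^d with coordinates in the unit box [0,1]×[0,1] and nonzero, and for each coordinate l such that arg((r_i)_l) + arg((z_{i−1})_l) − arg((z_i)_l) = 0 for all i ∈ {1,…,k}, we have ∏_{i=1}^k (φ_l(z_{i−1}, r_i, z_i)/(2R)) ≤ φ_l(z₀, r, z_k)/(2R), where φ_l(x, s, y) := Re(x_l·s_l·conj(y_l)). -/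
open Complex in
private theorem inj_re_tri (x y w : ℂ)
    (h : arg y + arg x - arg w = 0) :
    (x * y * (starRingEnd ℂ) w).re = ‖x‖ * ‖y‖ * ‖w‖ := by
  have hw' : (starRingEnd ℂ) w = (‖w‖ : ℂ) * Complex.exp (-(arg w) * I) := by
    conv_lhs => rw [← Complex.norm_mul_exp_arg_mul_I w]
    rw [map_mul, Complex.conj_ofReal, ← Complex.exp_conj]
    congr 1
    simp [Complex.conj_I]
  rw [hw']
  conv_lhs => rw [← Complex.norm_mul_exp_arg_mul_I x, ← Complex.norm_mul_exp_arg_mul_I y]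
  have e1 : ((‖x‖ : ℂ) * Complex.exp (arg x * I)) * ((‖y‖ : ℂ) * Complex.exp (arg y * I)) * ((‖w‖ : ℂ) * Complex.exp (-(arg w) * I))
      = ((‖x‖ * ‖y‖ * ‖w‖ : ℝ) : ℂ) * Complex.exp (((arg y + arg x - arg w : ℝ)) * I) := by
    rw [show (((arg y + arg x - arg w : ℝ) : ℂ)) * I = arg x * I + arg y * I + (-(arg w) * I) by push_cast; ring,
      Complex.exp_add, Complex.exp_add]
    push_cast
    ring
  rw [e1, h]
  simp

open Complex in
private theorem inj_conj_polar (w : ℂ) :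
    (starRingEnd ℂ) w = (‖w‖ : ℂ) * Complex.exp ((-arg w : ℝ) * I) := by
  conv_lhs => rw [← Complex.norm_mul_exp_arg_mul_I w]
  rw [map_mul, Complex.conj_ofReal, ← Complex.exp_conj]
  congr 1
  push_cast
  simp [Complex.conj_I]

open Complex in
private theorem inj_prod_polar {k : ℕ} (f : Fin k → ℂ) :
    ∏ i, f i = ((∏ i, ‖f i‖ : ℝ) : ℂ) * Complex.exp ((∑ i, arg (f i) : ℝ) * I) := by
  push_cast
  rw [Finset.sum_mul, Complex.exp_sum, ← Finset.prod_mul_distrib]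
  exact Finset.prod_congr rfl fun i _ => (Complex.norm_mul_exp_arg_mul_I (f i)).symm

private theorem inj_prod_bound (R : ℝ) (hR : 0 < R) (g b : ℕ → ℝ) (hg : ∀ j, 0 ≤ g j)
    (hg2 : ∀ j, g j ^ 2 ≤ 2) (hb : ∀ j, 0 ≤ b j) :
    ∀ k, 1 ≤ k → ∏ i ∈ Finset.range k, (g i * b i * g (i + 1) / (2 * R)) ≤
      g 0 * g k * (∏ i ∈ Finset.range k, b i) / (2 * R ^ k) := by
  intro k hk
  induction k with
  | zero => omega
  | succ n ih =>
    rcases Nat.eq_or_lt_of_le hk with h1 | h1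
    · simp [← h1]
      ring_nf
      exact le_rfl
    · have hn : 1 ≤ n := by omega
      have ihn := ih hn
      rw [Finset.prod_range_succ, Finset.prod_range_succ (f := b)]
      have hterm : 0 ≤ g n * b n * g (n + 1) / (2 * R) :=
        div_nonneg (mul_nonneg (mul_nonneg (hg n) (hb n)) (hg (n+1))) (by linarith)
      have hPb : 0 ≤ ∏ i ∈ Finset.range n, b i := Finset.prod_nonneg fun i _ => hb i
      have hgg : 0 ≤ g 0 * g (n + 1) * ((∏ i ∈ Finset.range n, b i) * b n) / (2 * R ^ (n + 1)) :=
        div_nonneg (mul_nonneg (mul_nonneg (hg 0) (hg (n+1))) (mul_nonneg hPb (hb n)))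
          (by positivity)
      calc (∏ i ∈ Finset.range n, (g i * b i * g (i + 1) / (2 * R))) * (g n * b n * g (n + 1) / (2 * R))
          ≤ (g 0 * g n * (∏ i ∈ Finset.range n, b i) / (2 * R ^ n)) * (g n * b n * g (n + 1) / (2 * R)) := by
            apply mul_le_mul_of_nonneg_right ihn hterm
        _ = (g 0 * g (n + 1) * ((∏ i ∈ Finset.range n, b i) * b n) / (2 * R ^ (n + 1))) * (g n ^ 2 / 2) := by
            field_simp
            ring
        _ ≤ (g 0 * g (n + 1) * ((∏ i ∈ Finset.range n, b i) * b n) / (2 * R ^ (n + 1))) * 1 := by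
            apply mul_le_mul_of_nonneg_left _ hgg
            linarith [hg2 n]
        _ = g 0 * g (n + 1) * ((∏ i ∈ Finset.range n, b i) * b n) / (2 * R ^ (n + 1)) := by ring

open Fin.NatCast

theorem horn_rule_injection (d k : ℕ) (hd : 1 ≤ d) (hk : 1 ≤ k) (R : ℝ) (hR : 0 < R)
    (r : Fin k → Fin d → ℂ) (rh : Fin d → ℂ)
    (hrne : ∀ i l, r i l ≠ 0) (hrhne : ∀ l, rh l ≠ 0)
    (hrq : ∀ i l, 0 ≤ (r i l).re ∧ 0 ≤ (r i l).im)
    (hrhq : ∀ l, 0 ≤ (rh l).re ∧ 0 ≤ (rh l).im)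
    (hrR : ∀ i l, ‖r i l‖ ≤ R) (hrhR : ∀ l, ‖rh l‖ ≤ R)
    (hcond : ∀ l, (∏ i, r i l).re / R ^ k ≤ (rh l).re / R ∧
      (∏ i, r i l).im / R ^ k = (rh l).im / R)
    (z : Fin (k + 1) → Fin d → ℂ)
    (hzne : ∀ i l, z i l ≠ 0)
    (hzbox : ∀ i l, 0 ≤ (z i l).re ∧ (z i l).re ≤ 1 ∧ 0 ≤ (z i l).im ∧ (z i l).im ≤ 1)
    (l : Fin d)
    (hph : ∀ i : Fin k,
      Complex.arg (r i l) + Complex.arg (z i.castSucc l) - Complex.arg (z i.succ l) = 0) :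
    (∏ i : Fin k, (z i.castSucc l * r i l * (starRingEnd ℂ) (z i.succ l)).re / (2 * R)) ≤
      (z 0 l * rh l * (starRingEnd ℂ) (z (Fin.last k) l)).re / (2 * R) := by
  haveI : NeZero k := ⟨by omega⟩
  -- cast lemmas
  have c1 : ∀ i : Fin k, (((i : ℕ) : ℕ) : Fin (k+1)) = i.castSucc := by
    intro i; ext; rw [Fin.val_cast_of_lt (by omega)]; simp
  have c2 : ∀ i : Fin k, ((((i : ℕ)+1) : ℕ) : Fin (k+1)) = i.succ := by
    intro i; ext; rw [Fin.val_cast_of_lt (by omega)]; simp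
  have c3 : ∀ i : Fin k, ((i : ℕ) : Fin k) = i := fun i => Fin.cast_val_eq_self i
  have c4 : ((k : ℕ) : Fin (k+1)) = Fin.last k := by
    ext; rw [Fin.val_cast_of_lt (by omega)]; simp
  have c5 : ((0 : ℕ) : Fin (k+1)) = 0 := by simp
  -- abbreviations
  set g : ℕ → ℝ := fun j => ‖z (j : Fin (k+1)) l‖ with hg_def
  set b : ℕ → ℝ := fun j => ‖r ((j : ℕ) : Fin k) l‖ with hb_def
  set P : ℝ := ∏ i : Fin k, ‖r i l‖ with hP_def
  set θ : ℝ := Complex.arg (z (Fin.last k) l) - Complex.arg (z 0 l) with hθ_def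
  -- telescoping sum of args
  have hS : (∑ i : Fin k, Complex.arg (r i l)) = θ := by
    have : (∑ i : Fin k, Complex.arg (r i l))
        = ∑ j ∈ Finset.range k, (Complex.arg (z ((j+1 : ℕ) : Fin (k+1)) l)
            - Complex.arg (z ((j : ℕ) : Fin (k+1)) l)) := by
      rw [← Fin.sum_univ_eq_sum_range
        (fun j => Complex.arg (z ((j+1 : ℕ) : Fin (k+1)) l) - Complex.arg (z ((j : ℕ) : Fin (k+1)) l)) k]
      refine Finset.sum_congr rfl fun i _ => ?_
      rw [c1 i, c2 i]
      linarith [hph i]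
    rw [this, Finset.sum_range_sub (fun j => Complex.arg (z ((j : ℕ) : Fin (k+1)) l)) k, c4, c5]
  -- arg bounds
  have hargz : ∀ i : Fin (k+1), 0 ≤ Complex.arg (z i l) ∧ Complex.arg (z i l) ≤ Real.pi / 2 := by
    intro i
    exact ⟨Complex.arg_nonneg_iff.mpr (hzbox i l).2.2.1,
      Complex.arg_le_pi_div_two_iff.mpr (Or.inl (hzbox i l).1)⟩
  have hθ0 : 0 ≤ θ := by
    rw [← hS]
    exact Finset.sum_nonneg fun i _ => Complex.arg_nonneg_iff.mpr (hrq i l).2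
  have hθhalf : θ ≤ Real.pi / 2 := by
    rw [hθ_def]
    linarith [(hargz (Fin.last k)).2, (hargz 0).1]
  have hcos : 0 ≤ Real.cos θ :=
    Real.cos_nonneg_of_mem_Icc ⟨by linarith [Real.pi_pos], hθhalf⟩
  have hsin : 0 ≤ Real.sin θ :=
    Real.sin_nonneg_of_nonneg_of_le_pi hθ0 (by linarith [Real.pi_pos])
  -- product of body relations in polar form
  have hPr : ∏ i, r i l = (P : ℂ) * Complex.exp ((θ : ℝ) * Complex.I) := by
    rw [inj_prod_polar (fun i => r i l), hS, hP_def]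
  have hPre : (∏ i, r i l).re = P * Real.cos θ := by
    rw [hPr, Complex.re_ofReal_mul, Complex.exp_ofReal_mul_I_re]
  have hPim : (∏ i, r i l).im = P * Real.sin θ := by
    rw [hPr, Complex.im_ofReal_mul, Complex.exp_ofReal_mul_I_im]
  -- RHS in terms of moduli and θ
  set A0 : ℝ := ‖z 0 l‖ with hA0_def
  set Ak : ℝ := ‖z (Fin.last k) l‖ with hAk_def
  have hRHS : (z 0 l * rh l * (starRingEnd ℂ) (z (Fin.last k) l)).re
      = A0 * Ak * ((rh l).re * Real.cos θ + (rh l).im * Real.sin θ) := by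
    have e : z 0 l * rh l * (starRingEnd ℂ) (z (Fin.last k) l)
        = ((A0 * Ak : ℝ) : ℂ) * (rh l * Complex.exp (((-θ : ℝ)) * Complex.I)) := by
      rw [inj_conj_polar (z (Fin.last k) l)]
      conv_lhs => rw [← Complex.norm_mul_exp_arg_mul_I (z 0 l)]
      rw [show (((-θ : ℝ)) : ℂ) * Complex.I
          = ((Complex.arg (z 0 l) : ℝ) : ℂ) * Complex.I
            + ((-Complex.arg (z (Fin.last k) l) : ℝ) : ℂ) * Complex.I by
        rw [hθ_def]; push_cast; ring]
      rw [Complex.exp_add]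
      push_cast
      ring
    rw [e, Complex.re_ofReal_mul, Complex.mul_re, Complex.exp_ofReal_mul_I_re,
      Complex.exp_ofReal_mul_I_im, Real.cos_neg, Real.sin_neg]
    ring
  -- key scalar inequality
  have hPnn : 0 ≤ P := Finset.prod_nonneg fun i _ => norm_nonneg _
  have hRk : (0:ℝ) < R ^ k := pow_pos hR k
  have hkey : P / R ^ k ≤ ((rh l).re * Real.cos θ + (rh l).im * Real.sin θ) / R := by
    have h1 := (hcond l).1
    have h2 := (hcond l).2
    rw [hPre] at h1
    rw [hPim] at h2
    rw [div_le_div_iff₀ hRk hR] at h1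
    rw [div_eq_div_iff hRk.ne' hR.ne'] at h2
    rw [div_le_div_iff₀ hRk hR]
    have h1' : Real.cos θ * (P * Real.cos θ * R) ≤ Real.cos θ * ((rh l).re * R ^ k) :=
      mul_le_mul_of_nonneg_left h1 hcos
    have h2' : Real.sin θ * (P * Real.sin θ * R) = Real.sin θ * ((rh l).im * R ^ k) := by
      rw [h2]
    have hpyth := Real.sin_sq_add_cos_sq θ
    have hPR : P * R = Real.cos θ * (P * Real.cos θ * R) + Real.sin θ * (P * Real.sin θ * R) := by
      linear_combination (-(P * R)) * hpyth
    linarith [h1', h2', hPR]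
  -- rewrite LHS as a range product
  have hL : (∏ i : Fin k, (z i.castSucc l * r i l * (starRingEnd ℂ) (z i.succ l)).re / (2 * R))
      = ∏ j ∈ Finset.range k, (g j * b j * g (j+1) / (2 * R)) := by
    rw [← Fin.prod_univ_eq_prod_range (fun j => g j * b j * g (j+1) / (2 * R)) k]
    refine Finset.prod_congr rfl fun i _ => ?_
    rw [inj_re_tri _ _ _ (hph i)]
    simp only [hg_def, hb_def, c1 i, c2 i, c3 i]
  -- bounds for g and b
  have hgnn : ∀ j, 0 ≤ g j := fun j => norm_nonneg _
  have hg2 : ∀ j, g j ^ 2 ≤ 2 := by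
    intro j
    rw [hg_def]
    simp only
    rw [Complex.sq_norm, Complex.normSq_apply]
    obtain ⟨h1, h2, h3, h4⟩ := hzbox ((j : ℕ) : Fin (k+1)) l
    nlinarith
  have hbnn : ∀ j, 0 ≤ b j := fun j => norm_nonneg _
  -- apply the product bound
  have hprod := inj_prod_bound R hR g b hgnn hg2 hbnn k hk
  have hg0 : g 0 = A0 := by rw [hg_def]; simp only; rw [c5, hA0_def]
  have hgk : g k = Ak := by rw [hg_def]; simp only; rw [c4, hAk_def]
  have hbP : (∏ i ∈ Finset.range k, b i) = P := by
    rw [← Fin.prod_univ_eq_prod_range b k, hP_def]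
    exact Finset.prod_congr rfl fun i _ => by rw [hb_def]; simp only [c3 i]
  rw [hL, hRHS]
  calc (∏ j ∈ Finset.range k, (g j * b j * g (j+1) / (2 * R)))
      ≤ g 0 * g k * (∏ i ∈ Finset.range k, b i) / (2 * R ^ k) := hprod
    _ = (A0 * Ak / 2) * (P / R ^ k) := by rw [hg0, hgk, hbP]; ring
    _ ≤ (A0 * Ak / 2) * (((rh l).re * Real.cos θ + (rh l).im * Real.sin θ) / R) := by
        apply mul_le_mul_of_nonneg_left hkey
        have := norm_nonneg (z 0 l)
        have := norm_nonneg (z (Fin.last k) l)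
        positivity
    _ = A0 * Ak * ((rh l).re * Real.cos θ + (rh l).im * Real.sin θ) / (2 * R) := by ring
end
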